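/- arXiv:2403.11940 — 7 statements merged into one kernel-verified Lean document; each statement's English description precedes it below -/
import Mathlib

section
/- Let B = {b_1, ..., b_k} be a finite set of positive integers with gcd(B) = 1, smallest element b_1 and largest element b_k. Then every integer n ≥ (b_1 - 1)(b_k - 1) can be written as a non-negative integer combination n = Σ a_i b_i with a_i ∈ ℕ. -/
private lemma schur_bezout (s : Finset ℕ) :
    ∃ c : ℕ → ℤ, ((s.gcd id : ℕ) : ℤ) = ∑ b ∈ s, c b * (b : ℤ) := by
  classical
  induction s using Finset.induction_on with
  | empty => exact ⟨fun _ => 0, by simp⟩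
  | @insert a s ha ih =>
    obtain ⟨c, hc⟩ := ih
    set g := s.gcd id with hg
    refine ⟨fun b => if b = a then Int.gcdA a g else Int.gcdB a g * c b, ?_⟩
    rw [Finset.sum_insert ha]
    have h1 : (insert a s).gcd id = Nat.gcd a g := by rw [Finset.gcd_insert]; rfl
    have h2 : ((Nat.gcd a g : ℕ) : ℤ) = (a : ℤ) * Int.gcdA a g + (g : ℤ) * Int.gcdB a g := by
      have := Int.gcd_eq_gcd_ab (a : ℤ) (g : ℤ)
      rwa [Int.gcd_natCast_natCast] at this
    have h3 : ∑ b ∈ s, (if b = a then Int.gcdA a g else Int.gcdB a g * c b) * (b : ℤ)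
        = Int.gcdB a g * ∑ b ∈ s, c b * (b : ℤ) := by
      rw [Finset.mul_sum]
      refine Finset.sum_congr rfl fun b hb => ?_
      rw [if_neg (by rintro rfl; exact ha hb)]; ring
    rw [h1, h2, h3, ← hc]
    simp only [if_true]
    ring

/-- Schur's theorem on numerical semigroups: if `B` is a nonempty finite set of positive
integers with gcd 1, smallest element `b₁` and largest element `b_k`, then every
`n ≥ (b₁ - 1)(b_k - 1)` is a nonnegative integer combination of elements of `B`. -/
theorem schur_numerical_semigroup (B : Finset ℕ) (hB : B.Nonempty)
    (hpos : ∀ b ∈ B, 0 < b) (hgcd : B.gcd id = 1) (n : ℕ)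
    (hn : (B.min' hB - 1) * (B.max' hB - 1) ≤ n) :
    ∃ a : ℕ → ℕ, n = ∑ b ∈ B, a b * b := by
  classical
  set b₁ := B.min' hB with hb₁def
  set bk := B.max' hB with hbkdef
  have hb₁B : b₁ ∈ B := B.min'_mem hB
  have hbkB : bk ∈ B := B.max'_mem hB
  have hb₁pos : 0 < b₁ := hpos _ hb₁B
  have hbkpos : 0 < bk := hpos _ hbkB
  -- multiset representations give coefficient representations
  have repM : ∀ m : Multiset ℕ, (∀ x ∈ m, x ∈ B) →
      ∃ a : ℕ → ℕ, m.sum = ∑ b ∈ B, a b * b := by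
    intro m hm
    refine ⟨fun b => m.count b, ?_⟩
    have h1 : (m.map id).sum = ∑ x ∈ m.toFinset, m.count x • id x :=
      Finset.sum_multiset_map_count m id
    rw [Multiset.map_id] at h1
    calc m.sum = ∑ x ∈ m.toFinset, m.count x * x := by simpa [smul_eq_mul] using h1
      _ = ∑ b ∈ B, m.count b * b := by
          refine Finset.sum_subset (fun x hx => hm x (Multiset.mem_toFinset.1 hx)) ?_
          intro x _ hxn
          rw [Multiset.count_eq_zero_of_notMem (fun h => hxn (Multiset.mem_toFinset.2 h))]
          ring
  -- a representable number congruent to 1 mod b₁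
  obtain ⟨c, hc⟩ := schur_bezout B
  rw [hgcd] at hc
  push_cast at hc
  set a₀ : ℕ → ℕ := fun b => ((c b) % (b₁ : ℤ)).toNat with ha₀
  set t₁ : ℕ := ∑ b ∈ B, a₀ b * b with ht₁def
  have hb₁z : (b₁ : ℤ) ≠ 0 := by exact_mod_cast hb₁pos.ne'
  have ht₁ : ((b₁ : ℤ)) ∣ (t₁ : ℤ) - 1 := by
    have hcast : (t₁ : ℤ) = ∑ b ∈ B, ((c b) % (b₁ : ℤ)) * (b : ℤ) := by
      rw [ht₁def]
      push_cast
      refine Finset.sum_congr rfl fun b _ => ?_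
      rw [ha₀]
      rw [Int.toNat_of_nonneg (Int.emod_nonneg _ hb₁z)]
    have heq : (t₁ : ℤ) - 1 = ∑ b ∈ B, ((c b) % (b₁ : ℤ) - c b) * (b : ℤ) := by
      rw [hcast]
      conv_lhs => rw [hc]
      rw [← Finset.sum_sub_distrib]
      refine Finset.sum_congr rfl fun b _ => by ring
    rw [heq]
    refine Finset.dvd_sum fun b _ => Dvd.dvd.mul_right ⟨-(c b / (b₁ : ℤ)), ?_⟩ _
    rw [Int.emod_def]; ring
  -- the predicate: representable and congruent to n mod b₁
  have hPex : ∃ t : ℕ, (∃ a : ℕ → ℕ, t = ∑ b ∈ B, a b * b) ∧ t % b₁ = n % b₁ := by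
    refine ⟨(n % b₁) * t₁, ⟨fun b => (n % b₁) * a₀ b, ?_⟩, ?_⟩
    · rw [ht₁def, Finset.mul_sum]
      refine Finset.sum_congr rfl fun b _ => by ring
    · have hdvd : (b₁ : ℤ) ∣ (((n % b₁) * t₁ : ℕ) : ℤ) - ((n % b₁ : ℕ) : ℤ) := by
        have heq2 : (((n % b₁) * t₁ : ℕ) : ℤ) - ((n % b₁ : ℕ) : ℤ)
            = ((n % b₁ : ℕ) : ℤ) * ((t₁ : ℤ) - 1) := by push_cast; ring
        rw [heq2]
        exact Dvd.dvd.mul_left ht₁ _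
      have h2 : ((((n % b₁) * t₁) % b₁ : ℕ) : ℤ) = (((n % b₁) % b₁ : ℕ) : ℤ) := by
        rw [Int.natCast_mod, Int.natCast_mod]
        exact Int.ModEq.symm (Int.modEq_iff_dvd.mpr hdvd)
      have h1 : (((n % b₁) * t₁) % b₁ : ℕ) = ((n % b₁) % b₁ : ℕ) := by exact_mod_cast h2
      rw [h1, Nat.mod_mod_of_dvd _ dvd_rfl]
  have htspec := Nat.find_spec hPex
  set t := Nat.find hPex with htdef
  obtain ⟨⟨a, hat⟩, hmod⟩ := htspec
  have hmin : ∀ s : ℕ, ((∃ a : ℕ → ℕ, s = ∑ b ∈ B, a b * b) ∧ s % b₁ = n % b₁) → t ≤ s :=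
    fun s hs => Nat.find_min' hPex hs
  -- the multiset representing t
  set m : Multiset ℕ := ∑ b ∈ B, Multiset.replicate (a b) b with hmdef
  have hm_mem : ∀ x ∈ m, x ∈ B := by
    intro x hx
    rw [hmdef, Multiset.mem_sum] at hx
    obtain ⟨b, hb, hxb⟩ := hx
    rwa [Multiset.eq_of_mem_replicate hxb]
  have hm_sum : m.sum = t := by
    have key : ∀ s : Finset ℕ, (∑ b ∈ s, Multiset.replicate (a b) b).sum = ∑ b ∈ s, a b * b := by
      intro s
      induction s using Finset.cons_induction with
      | empty => simp
      | cons b s hb ih => rw [Finset.sum_cons, Finset.sum_cons, Multiset.sum_add, Multiset.sum_replicate, ih, smul_eq_mul]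
    rw [hmdef, key]
    exact hat.symm
  -- card bound via pigeonhole + minimality
  have hcard : Multiset.card m < b₁ := by
    by_contra hge
    push_neg at hge
    set l := m.toList with hldef
    have hlen : b₁ ≤ l.length := by rw [hldef, Multiset.length_toList]; exact hge
    have hlsum : l.sum = t := by rw [hldef, Multiset.sum_toList, hm_sum]
    have hmeml : ∀ x ∈ l, x ∈ B := by
      intro x hx
      rw [hldef, Multiset.mem_toList] at hx
      exact hm_mem x hx
    have key : ∀ i j : Fin (b₁ + 1), (i : ℕ) < (j : ℕ) →
        (l.take i).sum % b₁ = (l.take j).sum % b₁ → False := by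
      intro i j hij hfeq
      set li := l.take (i : ℕ) with hli
      set seg := (l.drop (i : ℕ)).take ((j : ℕ) - i) with hseg
      set rest := l.drop (j : ℕ) with hrest
      have h_take : l.take (j : ℕ) = li ++ seg := by
        rw [hli, hseg, ← List.take_add, Nat.add_sub_cancel' (le_of_lt hij)]
      have h_rest : rest = (l.drop (i : ℕ)).drop ((j : ℕ) - i) := by
        rw [hrest, List.drop_drop, Nat.add_sub_cancel' (le_of_lt hij)]
      have h_split : l.drop (i : ℕ) = seg ++ rest := by
        rw [hseg, h_rest]; exact (List.take_append_drop _ _).symm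
      have htotal : t = li.sum + seg.sum + rest.sum := by
        rw [← hlsum]
        conv_lhs => rw [← List.take_append_drop (i : ℕ) l]
        rw [List.sum_append, h_split, List.sum_append, add_assoc]
      have hdvdseg : b₁ ∣ seg.sum := by
        rw [h_take, List.sum_append] at hfeq
        have hle : li.sum ≤ li.sum + seg.sum := Nat.le_add_right _ _
        have := (Nat.modEq_iff_dvd' hle).mp hfeq
        simpa using this
      have hsegpos : 0 < seg.sum := by
        have hne : seg ≠ [] := by
          rw [hseg, ← List.length_pos_iff, List.length_take, List.length_drop]
          have hj : (j : ℕ) ≤ b₁ := Nat.le_of_lt_succ j.isLt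
          omega
        have hmem : ∀ x ∈ seg, 0 < x := by
          intro x hx
          exact hpos x (hmeml x (List.mem_of_mem_drop (List.mem_of_mem_take hx)))
        rcases seg with _ | ⟨y, ys⟩
        · exact absurd rfl hne
        · have := hmem y (List.mem_cons_self (a := y) (l := ys))
          simp only [List.sum_cons]
          omega
      set t' := li.sum + rest.sum with ht'
      have ht'rep : ∃ a : ℕ → ℕ, t' = ∑ b ∈ B, a b * b := by
        obtain ⟨a', ha'⟩ := repM (↑(li ++ rest)) (by
          intro x hx
          rw [Multiset.mem_coe, List.mem_append] at hx
          rcases hx with hx | hx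
          · exact hmeml x (List.mem_of_mem_take hx)
          · exact hmeml x (List.mem_of_mem_drop hx))
        refine ⟨a', ?_⟩
        rwa [Multiset.sum_coe, List.sum_append] at ha'
      have ht'mod : t' % b₁ = n % b₁ := by
        rw [← hmod]
        obtain ⟨q, hq⟩ := hdvdseg
        have heq3 : t = t' + b₁ * q := by omega
        rw [heq3, Nat.add_mul_mod_self_left]
      have := hmin t' ⟨ht'rep, ht'mod⟩
      omega
    have hcards : Fintype.card (Fin b₁) < Fintype.card (Fin (b₁ + 1)) := by
      simp [Fintype.card_fin]
    obtain ⟨i, j, hij, hfeq⟩ := Fintype.exists_ne_map_eq_of_card_lt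
      (fun i : Fin (b₁ + 1) => (⟨(l.take (i : ℕ)).sum % b₁, Nat.mod_lt _ hb₁pos⟩ : Fin b₁)) hcards
    have hfeq' : (l.take (i : ℕ)).sum % b₁ = (l.take (j : ℕ)).sum % b₁ := by
      simpa [Fin.mk.injEq] using hfeq
    rcases lt_or_gt_of_ne (fun h : (i : ℕ) = (j : ℕ) => hij (Fin.ext h)) with h | h
    · exact key i j h hfeq'
    · exact key j i h hfeq'.symm
  -- t ≤ (b₁ - 1) * bk
  have htb : t ≤ (b₁ - 1) * bk := by
    rw [← hm_sum]
    calc m.sum ≤ Multiset.card m • bk := by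
          exact Multiset.sum_le_card_nsmul m bk (fun x hx => Finset.le_max' B x (hm_mem x hx))
      _ = Multiset.card m * bk := by rw [smul_eq_mul]
      _ ≤ (b₁ - 1) * bk := Nat.mul_le_mul_right _ (by omega)
  -- conclude
  have hlt : t < n + b₁ := by
    have h1 : (b₁ - 1) * bk ≤ (b₁ - 1) * (bk - 1) + (b₁ - 1) := by
      calc (b₁ - 1) * bk ≤ (b₁ - 1) * ((bk - 1) + 1) := Nat.mul_le_mul_left _ (by omega)
        _ = (b₁ - 1) * (bk - 1) + (b₁ - 1) := by ring
    omega
  have hle : t ≤ n := by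
    by_contra h
    push_neg at h
    have hd : b₁ ∣ t - n := (Nat.modEq_iff_dvd' h.le).mp (hmod.symm : Nat.ModEq b₁ n t)
    have := Nat.le_of_dvd (by omega) hd
    omega
  have hd2 : b₁ ∣ n - t := (Nat.modEq_iff_dvd' hle).mp (hmod : Nat.ModEq b₁ t n)
  obtain ⟨q, hq⟩ := hd2
  have hn2 : n = b₁ * q + t := (Nat.sub_eq_iff_eq_add hle).mp hq
  refine ⟨fun b => a b + (if b = b₁ then q else 0), ?_⟩
  have hsum2 : ∑ b ∈ B, (a b + if b = b₁ then q else 0) * b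
      = (∑ b ∈ B, a b * b) + ∑ b ∈ B, (if b = b₁ then q else 0) * b := by
    rw [← Finset.sum_add_distrib]
    exact Finset.sum_congr rfl fun b _ => by ring
  have hsum3 : ∑ b ∈ B, (if b = b₁ then q else 0) * b = q * b₁ := by
    simp [ite_mul, Finset.sum_ite_eq', hb₁B]
  rw [hsum2, hsum3, ← hat]
  calc n = b₁ * q + t := hn2
    _ = t + q * b₁ := by ring
end

section
/- Let G be a strongly connected directed graph (every vertex has out-degree at least 1) on a finite vertex set, with diameter at most D (there is a directed path of length at most D between any ordered pair of vertices), and suppose G is aperiodic (the gcd of the lengths of all closed walks through any fixed vertex is 1). Then for any vertex a, there exists a set Q of closed walks through a such that every walk in Q has length at most 2D+1, at least one walk in Q has length at most D+1, and the gcd of the lengths of the walks in Q is 1. -/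
/-- There is a directed walk of length `k` from `u` to `v` along relation `R`. -/
def HasWalk {V : Type*} (R : V → V → Prop) (u v : V) (k : ℕ) : Prop :=
  ∃ f : ℕ → V, f 0 = u ∧ f k = v ∧ ∀ i < k, R (f i) (f (i + 1))

theorem HasWalk.trans {V : Type*} {R : V → V → Prop} {u v w : V} {k l : ℕ}
    (h1 : HasWalk R u v k) (h2 : HasWalk R v w l) : HasWalk R u w (k + l) := by
  obtain ⟨f, hf0, hfk, hf⟩ := h1
  obtain ⟨g, hg0, hgl, hg⟩ := h2
  refine ⟨fun i => if i ≤ k then f i else g (i - k), by simp [hf0], ?_, ?_⟩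
  · by_cases h : l = 0
    · subst h; simp only [Nat.add_zero, le_refl, if_pos]
      rw [hfk, ← hg0, hgl]
    · have hnle : ¬ (k + l ≤ k) := by omega
      simp only [hnle, if_neg, Nat.add_sub_cancel_left, hgl, if_false]
  · intro i hi
    by_cases h : i + 1 ≤ k
    · have h' : i ≤ k := by omega
      simp only [h, h', if_pos]
      exact hf i (by omega)
    · by_cases h' : i ≤ k
      · have hik : i = k := by omega
        have hl : 0 < l := by omega
        simp only [h, h', if_pos, if_neg, if_false]
        rw [hik, hfk, ← hg0]
        have : k + 1 - k = 1 := by omega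
        rw [this]
        exact hg 0 hl
      · simp only [h, h', if_neg, if_false]
        have e1 : i + 1 - k = (i - k) + 1 := by omega
        rw [e1]
        exact hg (i - k) (by omega)

theorem HasWalk.single {V : Type*} {R : V → V → Prop} {u v : V} (h : R u v) :
    HasWalk R u v 1 := by
  refine ⟨fun i => if i = 0 then u else v, by simp, by simp, ?_⟩
  intro i hi
  have : i = 0 := by omega
  subst this
  simpa using h

/-- In a finite, strongly connected (diameter at most D), aperiodic directed graph with
out-degree at least 1 everywhere, every vertex `a` has a finite set `Q` of closed-walk
lengths, each positive and at most `2D+1`, one of which is at most `D+1`, with gcd 1. -/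
theorem exists_short_loops_gcd_one {V : Type*} [Fintype V] (R : V → V → Prop) (D : ℕ)
    (hout : ∀ u : V, ∃ v, R u v)
    (hdiam : ∀ u v : V, ∃ k ≤ D, HasWalk R u v k)
    (haper : ∀ (a : V) (d : ℕ), (∀ k, 0 < k → HasWalk R a a k → d ∣ k) → d = 1)
    (a : V) :
    ∃ Q : Finset ℕ, Q.Nonempty ∧
      (∀ q ∈ Q, 0 < q ∧ q ≤ 2 * D + 1 ∧ HasWalk R a a q) ∧
      (∃ q ∈ Q, q ≤ D + 1) ∧ Q.gcd id = 1 := by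
  classical
  choose s hsD hsW using fun u => hdiam a u
  choose r hrD hrW using fun u => hdiam u a
  set Q : Finset ℕ :=
    (Finset.range (2 * D + 2)).filter (fun q => 0 < q ∧ HasWalk R a a q) with hQ
  have hmem : ∀ q, q ∈ Q ↔ (q < 2 * D + 2 ∧ 0 < q ∧ HasWalk R a a q) := by
    intro q; simp [hQ, and_assoc]
  obtain ⟨b, hb⟩ := hout a
  have hshort : HasWalk R a a (1 + r b) := (HasWalk.single hb).trans (hrW b)
  have hmemshort : (1 + r b) ∈ Q :=
    (hmem _).2 ⟨by have := hrD b; omega, by omega, hshort⟩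
  refine ⟨Q, ⟨_, hmemshort⟩, ?_, ⟨1 + r b, hmemshort, by have := hrD b; omega⟩, ?_⟩
  · intro q hq
    rw [hmem] at hq
    exact ⟨hq.2.1, by omega, hq.2.2⟩
  · apply haper a
    rintro k hk ⟨f, hf0, hfk, hf⟩
    set d := Q.gcd id with hd
    have hdvdA : ∀ i < k, (d : ℤ) ∣ ((s (f i) + 1 + r (f (i + 1)) : ℕ) : ℤ) := by
      intro i hi
      have hw : HasWalk R a a (s (f i) + 1 + r (f (i + 1))) :=
        ((hsW (f i)).trans (HasWalk.single (hf i hi))).trans (hrW (f (i + 1)))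
      have hm : (s (f i) + 1 + r (f (i + 1))) ∈ Q :=
        (hmem _).2 ⟨by have := hsD (f i); have := hrD (f (i + 1)); omega, by omega, hw⟩
      exact_mod_cast (Finset.gcd_dvd hm : d ∣ id _)
    have hdvdB : ∀ i, (d : ℤ) ∣ ((s (f i) + r (f i) : ℕ) : ℤ) := by
      intro i
      rcases Nat.eq_zero_or_pos (s (f i) + r (f i)) with h0 | hpos
      · simp [h0]
      · have hw : HasWalk R a a (s (f i) + r (f i)) := (hsW (f i)).trans (hrW (f i))
        have hm : (s (f i) + r (f i)) ∈ Q :=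
          (hmem _).2 ⟨by have := hsD (f i); have := hrD (f i); omega, hpos, hw⟩
        exact_mod_cast (Finset.gcd_dvd hm : d ∣ id _)
    have tele : ∑ i ∈ Finset.range k,
        (((s (f i) + 1 + r (f (i + 1)) : ℕ) : ℤ) - ((s (f i) + r (f i) : ℕ) : ℤ)) = k := by
      have h1 : ∀ i, (((s (f i) + 1 + r (f (i + 1)) : ℕ) : ℤ) - ((s (f i) + r (f i) : ℕ) : ℤ))
          = 1 + (((r (f (i + 1)) : ℤ)) - (r (f i) : ℤ)) := by
        intro i; push_cast; ring
      rw [Finset.sum_congr rfl (fun i _ => h1 i), Finset.sum_add_distrib,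
        Finset.sum_range_sub (fun i => (r (f i) : ℤ)), hfk, hf0]
      simp
    have key : (d : ℤ) ∣ (k : ℤ) := by
      rw [← tele]
      exact Finset.dvd_sum fun i hi => dvd_sub (hdvdA i (Finset.mem_range.1 hi)) (hdvdB i)
    exact_mod_cast key
end

section
/- Let G be a strongly connected, aperiodic directed graph on a finite vertex set with diameter at most D. Then for any two vertices a and b, there exists a vertex c and an integer k ≤ 2D² + D such that there is a directed walk from c to a of length exactly k and a directed walk from c to b of length exactly k. -/
open Pointwise

section helpers
variable {V : Type*} {R : V → V → Prop}

lemma hasWalk_zero (u : V) : HasWalk R u u 0 :=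
  ⟨fun _ => u, rfl, rfl, fun i hi => absurd hi (by omega)⟩

lemma hasWalk_comp {u v w : V} {j k : ℕ} (h1 : HasWalk R u v j) (h2 : HasWalk R v w k) :
    HasWalk R u w (j + k) := by
  obtain ⟨f, hf0, hfj, hfs⟩ := h1
  obtain ⟨g, hg0, hgk, hgs⟩ := h2
  refine ⟨fun i => if i < j then f i else g (i - j), ?_, ?_, ?_⟩
  · by_cases h : 0 < j
    · simpa [h] using hf0
    · have hj : j = 0 := by omega
      subst hj
      simpa using by rw [hg0, ← hfj, hf0]
  · have : ¬ (j + k < j) := by omega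
    simp only [this, if_false]
    simpa [Nat.add_sub_cancel_left] using hgk
  · intro i hi
    by_cases h1 : i + 1 < j
    · have h0 : i < j := by omega
      simp only [h0, h1, if_true]
      exact hfs i (by omega)
    · by_cases h0 : i < j
      · have hij : i + 1 = j := by omega
        simp only [h0, h1, if_true, if_false]
        have : g (i + 1 - j) = f j := by
          rw [hij]; simp [hg0, hfj]
        rw [this]
        exact hij ▸ hfs i (by omega)
      · simp only [h0, h1, if_false]
        have : i + 1 - j = (i - j) + 1 := by omega
        rw [this]
        exact hgs (i - j) (by omega)

lemma hasWalk_smul {v : V} {l : ℕ} (h : HasWalk R v v l) : ∀ n, HasWalk R v v (n * l)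
  | 0 => by simpa using hasWalk_zero v
  | n + 1 => by
      have := hasWalk_comp (hasWalk_smul h n) h
      simpa [Nat.succ_mul] using this

lemma hasWalk_single {u v : V} (h : R u v) : HasWalk R u v 1 := by
  refine ⟨fun i => if i = 0 then u else v, by simp, by simp, ?_⟩
  intro i hi
  have : i = 0 := by omega
  subst this; simpa using h

end helpers

lemma finset_gcd_bezout (B : Finset ℕ) : ∃ f : ℕ → ℤ, ∑ x ∈ B, f x * x = ((B.gcd id : ℕ) : ℤ) := by
  classical
  induction B using Finset.induction_on with
  | empty => exact ⟨0, by simp⟩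
  | insert _ _ ha =>
      rename_i a B ih
      obtain ⟨f, hf⟩ := ih
      refine ⟨fun x => if x = a then Nat.gcdA a (B.gcd id) else Nat.gcdB a (B.gcd id) * f x, ?_⟩
      rw [Finset.sum_insert ha, Finset.gcd_insert]
      have h1 : ∑ x ∈ B, (if x = a then Nat.gcdA a (B.gcd id) else Nat.gcdB a (B.gcd id) * f x) * (x:ℤ)
          = Nat.gcdB a (B.gcd id) * ∑ x ∈ B, f x * x := by
        rw [Finset.mul_sum]
        refine Finset.sum_congr rfl fun x hx => ?_
        have : x ≠ a := fun h => ha (h ▸ hx)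
        simp [this, mul_assoc]
      simp only [if_true, eq_self_iff_true]
      rw [h1, hf]
      have hid : (id a : ℕ) = a := rfl
      rw [hid, gcd_eq_nat_gcd, Nat.gcd_eq_gcd_ab a (B.gcd id)]
      have hn : normalize (B.gcd id) = B.gcd id := normalize_eq _
      ring

/-- In a finite, strongly connected, aperiodic directed graph of diameter at most `D`,
any two vertices `a`, `b` have a common witness: a vertex `c` with walks of the same
exact length `k ≤ 2D^2 + D` to both `a` and `b`. -/
theorem witness_distance_le {V : Type*} [Fintype V] (R : V → V → Prop) (D : ℕ)
    (hout : ∀ u : V, ∃ v, R u v)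
    (hdiam : ∀ u v : V, ∃ k ≤ D, HasWalk R u v k)
    (haper : ∀ (a : V) (d : ℕ), (∀ k, 0 < k → HasWalk R a a k → d ∣ k) → d = 1)
    (a b : V) :
    ∃ (c : V) (k : ℕ), k ≤ 2 * D ^ 2 + D ∧ HasWalk R c a k ∧ HasWalk R c b k := by
  classical
  obtain ⟨q, hqD, hwab⟩ := hdiam a b
  by_cases hq0 : q = 0
  · subst hq0
    obtain ⟨f, hf0, hfq, -⟩ := hwab
    refine ⟨a, 0, by omega, hasWalk_zero a, ?_⟩
    rw [show b = a from by rw [← hfq, hf0]]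
    exact hasWalk_zero a
  have hq1 : 1 ≤ q := by omega
  have hD1 : 1 ≤ D := le_trans hq1 hqD
  set A : Finset ℕ := (Finset.range (2*D+2)).filter (fun n => 0 < n ∧ HasWalk R a a n) with hA
  have hmemA : ∀ n, n ∈ A ↔ (n < 2*D+2 ∧ 0 < n ∧ HasWalk R a a n) := by
    intro n
    simp [hA, Finset.mem_filter, Finset.mem_range, and_assoc]
  set g := A.gcd id with hg
  have hgdvd : ∀ k, HasWalk R a a k → g ∣ k := by
    intro k
    induction k using Nat.strong_induction_on with
    | _ k ih =>
      intro hw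
      rcases Nat.eq_zero_or_pos k with hk0 | hkpos
      · rw [hk0]; exact dvd_zero g
      by_cases hsmall : k ≤ 2*D+1
      · exact Finset.gcd_dvd ((hmemA k).2 ⟨by omega, hkpos, hw⟩)
      · obtain ⟨f, hf0, hfk, hfs⟩ := hw
        have hpre : HasWalk R a (f (D+1)) (D+1) := ⟨f, hf0, rfl, fun i hi => hfs i (by omega)⟩
        have hsuf : HasWalk R (f (D+1)) a (k - (D+1)) := by
          refine ⟨fun i => f (i + (D+1)), by simp, ?_, ?_⟩
          · show f (k - (D+1) + (D+1)) = a
            rw [show k - (D+1) + (D+1) = k from by omega, hfk]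
          · intro i hi
            show R (f (i + (D+1))) (f (i + 1 + (D+1)))
            have h2 := hfs (i + (D+1)) (by omega)
            rwa [show i + (D+1) + 1 = i + 1 + (D+1) from by omega] at h2
        obtain ⟨t, htD, wat⟩ := hdiam a (f (D+1))
        obtain ⟨s', hsD, wua⟩ := hdiam (f (D+1)) a
        have hw1 : HasWalk R a a ((D+1) + s') := hasWalk_comp hpre wua
        have hw2 : HasWalk R a a (t + (k - (D+1))) := hasWalk_comp wat hsuf
        have hw3 : HasWalk R a a (t + s') := hasWalk_comp wat wua
        have hd1 : g ∣ (D+1) + s' := Finset.gcd_dvd ((hmemA _).2 ⟨by omega, by omega, hw1⟩)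
        have hd2 : g ∣ t + (k - (D+1)) := ih _ (by omega) hw2
        have hd3 : g ∣ t + s' := by
          rcases Nat.eq_zero_or_pos (t + s') with h0 | hpos
          · rw [h0]; exact dvd_zero g
          · exact Finset.gcd_dvd ((hmemA _).2 ⟨by omega, hpos, hw3⟩)
        have hsum : ((D+1) + s') + (t + (k - (D+1))) = k + (t + s') := by omega
        have hk1 : g ∣ k + (t + s') := by rw [← hsum]; exact dvd_add hd1 hd2
        have hk2 := Nat.dvd_sub hk1 hd3
        rwa [Nat.add_sub_cancel] at hk2
  have hg1 : g = 1 := haper a g (fun k _ hw => hgdvd k hw)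
  obtain ⟨s, hsW, hs1, hsD1⟩ : ∃ s, HasWalk R a a s ∧ 1 ≤ s ∧ s ≤ D + 1 := by
    obtain ⟨x, hx⟩ := hout a
    obtain ⟨k', hk'D, wxa⟩ := hdiam x a
    exact ⟨1 + k', hasWalk_comp (hasWalk_single hx) wxa, by omega, by omega⟩
  have hsA : s ∈ A := (hmemA s).2 ⟨by omega, by omega, hsW⟩
  by_cases hsq : s ∣ q
  · refine ⟨a, q, by nlinarith, ?_, hwab⟩
    obtain ⟨m, hm⟩ := hsq
    rw [hm, mul_comm]
    exact hasWalk_smul hsW m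
  · have hs2 : 2 ≤ s := by
      by_contra h
      have : s = 1 := by omega
      rw [this] at hsq
      exact hsq (one_dvd q)
    haveI : NeZero s := ⟨by omega⟩
    have hqs0 : ((q : ZMod s)) ≠ 0 := fun h => hsq ((CharP.cast_eq_zero_iff (ZMod s) s q).1 h)
    -- the finisher
    have finisher : ∀ Vv : ℕ, HasWalk R a a Vv → ((Vv : ZMod s) = -(q : ZMod s)) →
        Vv ≤ (s-2) * (2*D+1) →
        ∃ c k, k ≤ 2*D^2 + D ∧ HasWalk R c a k ∧ HasWalk R c b k := by
      intro Vv hVw hVcast hVle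
      have hdvd : s ∣ Vv + q := by
        have hcz : ((Vv + q : ℕ) : ZMod s) = 0 := by push_cast; rw [hVcast]; ring
        exact (CharP.cast_eq_zero_iff (ZMod s) s _).1 hcz
      refine ⟨a, Vv + q, ?_, ?_, hasWalk_comp hVw hwab⟩
      · have h1 : s - 2 ≤ D - 1 := by omega
        have h2 : Vv ≤ (D-1)*(2*D+1) := le_trans hVle (Nat.mul_le_mul_right _ h1)
        have h3 : (D-1)*(2*D+1) + D ≤ 2*D^2 + D := by
          obtain ⟨E, rfl⟩ : ∃ E, D = E+1 := ⟨D-1, by omega⟩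
          have hE : E + 1 - 1 = E := by omega
          rw [hE]
          nlinarith [sq_nonneg E]
        omega
      · obtain ⟨m, hm⟩ := hdvd
        rw [hm, mul_comm]
        exact hasWalk_smul hsW m
    set G : Finset (ZMod s) := A.image (Nat.cast) with hG
    let T : ℕ → Finset (ZMod s) := fun m => Nat.rec {0} (fun _ S => S ∪ (S + G)) m
    have hT0 : T 0 = {0} := rfl
    have hTs : ∀ m, T (m+1) = T m ∪ (T m + G) := fun _ => rfl
    have hTmono : ∀ m, T m ⊆ T (m+1) := by
      intro m
      rw [hTs]
      exact Finset.subset_union_left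
    have hT0m : ∀ m, (0 : ZMod s) ∈ T m := by
      intro m
      induction m with
      | zero => rw [hT0]; exact Finset.mem_singleton_self 0
      | succ m ih => exact hTmono m ih
    have hsem : ∀ m, ∀ ρ ∈ T m, ∃ Vv : ℕ, HasWalk R a a Vv ∧ Vv ≤ m * (2*D+1) ∧ (Vv : ZMod s) = ρ := by
      intro m
      induction m with
      | zero =>
          intro ρ hρ
          rw [hT0, Finset.mem_singleton] at hρ
          exact ⟨0, hasWalk_zero a, by omega, by simpa using hρ.symm⟩
      | succ m ih =>
          intro ρ hρ
          rw [hTs, Finset.mem_union] at hρ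
          rcases hρ with h | h
          · obtain ⟨Vv, h1, h2, h3⟩ := ih ρ h
            exact ⟨Vv, h1, le_trans h2 (Nat.mul_le_mul_right _ (by omega)), h3⟩
          · rw [Finset.mem_add] at h
            obtain ⟨y, hy, z, hz, hyz⟩ := h
            obtain ⟨Vv, h1, h2, h3⟩ := ih y hy
            rw [hG, Finset.mem_image] at hz
            obtain ⟨lam, hlamA, rfl⟩ := hz
            obtain ⟨hlt, hpos, hwlam⟩ := (hmemA lam).1 hlamA
            refine ⟨Vv + lam, hasWalk_comp h1 hwlam, ?_, ?_⟩
            · have hlam21 : lam ≤ 2*D+1 := by omega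
              calc Vv + lam ≤ m*(2*D+1) + (2*D+1) := by omega
                _ = (m+1)*(2*D+1) := by ring
            · push_cast
              rw [h3, hyz]
    have hcombo : ∀ ρ : ZMod s, ∃ c : ℕ → ℕ, ((∑ x ∈ A, c x * x : ℕ) : ZMod s) = ρ := by
      intro ρ
      obtain ⟨f, hfsum⟩ := finset_gcd_bezout A
      rw [← hg, hg1, Nat.cast_one] at hfsum
      have hsne : (s:ℤ) ≠ 0 := by exact_mod_cast (by omega : s ≠ 0)
      have hmod : ∀ z : ℤ, (((z % (s:ℤ) : ℤ)) : ZMod s) = (z : ZMod s) := by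
        intro z
        conv_rhs => rw [← Int.emod_add_mul_ediv z (s:ℤ)]
        push_cast
        simp
      set c : ℕ → ℕ := fun x => ((ρ.val : ℤ) * f x % (s:ℤ)).toNat with hc
      refine ⟨c, ?_⟩
      have hterm : ∀ x ∈ A, ((c x * x : ℕ) : ZMod s) = (((ρ.val : ℤ) * f x * x : ℤ) : ZMod s) := by
        intro x hxA
        have hnn : (0:ℤ) ≤ (ρ.val : ℤ) * f x % (s:ℤ) := Int.emod_nonneg _ hsne
        have h1 : ((c x : ℕ) : ℤ) = (ρ.val : ℤ) * f x % (s:ℤ) := by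
          rw [hc]; exact Int.toNat_of_nonneg hnn
        calc ((c x * x : ℕ) : ZMod s) = (((c x * x : ℕ) : ℤ) : ZMod s) := (Int.cast_natCast _).symm
          _ = ((((ρ.val : ℤ) * f x % (s:ℤ)) * x : ℤ) : ZMod s) := by
              rw [show ((c x * x : ℕ) : ℤ) = ((ρ.val : ℤ) * f x % (s:ℤ)) * (x:ℤ) from by
                push_cast [← h1]; ring]
          _ = (((ρ.val : ℤ) * f x * x : ℤ) : ZMod s) := by
              push_cast [hmod]
              ring
      calc ((∑ x ∈ A, c x * x : ℕ) : ZMod s) = ∑ x ∈ A, ((c x * x : ℕ) : ZMod s) := by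
            exact Nat.cast_sum _ _
        _ = ∑ x ∈ A, (((ρ.val : ℤ) * f x * x : ℤ) : ZMod s) := Finset.sum_congr rfl hterm
        _ = (((∑ x ∈ A, (ρ.val : ℤ) * f x * x : ℤ)) : ZMod s) := (Int.cast_sum _ _).symm
        _ = ρ := by
            rw [show (∑ x ∈ A, (ρ.val : ℤ) * f x * x) = (ρ.val : ℤ) * ∑ x ∈ A, f x * x from by
              rw [Finset.mul_sum]; exact Finset.sum_congr rfl fun x _ => by ring]
            rw [hfsum, mul_one, Int.cast_natCast]
            exact ZMod.natCast_rightInverse ρ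
    have hclosed : ∀ m, T (m+1) ⊆ T m → ∀ ρ : ZMod s, ρ ∈ T m := by
      intro m hsub ρ
      have hstep : ∀ t ∈ T m, ∀ x ∈ A, t + (x : ZMod s) ∈ T m := by
        intro t ht x hxA
        apply hsub
        rw [hTs]
        exact Finset.mem_union_right _ (Finset.add_mem_add ht (Finset.mem_image_of_mem _ hxA))
      have haddmul : ∀ (x : ℕ), x ∈ A → ∀ (n : ℕ), ∀ t ∈ T m, t + ((n * x : ℕ) : ZMod s) ∈ T m := by
        intro x hxA n
        induction n with
        | zero => intro t ht; simpa using ht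
        | succ n ih =>
            intro t ht
            have h2 := hstep _ (ih t ht) x hxA
            have heq : (t + ((n*x : ℕ) : ZMod s)) + (x : ZMod s) = t + (((n+1)*x : ℕ) : ZMod s) := by
              push_cast
              ring
            rwa [heq] at h2
      have hkey : ∀ (B : Finset ℕ), B ⊆ A → ∀ (c : ℕ → ℕ), ∀ t ∈ T m,
          t + ((∑ x ∈ B, c x * x : ℕ) : ZMod s) ∈ T m := by
        intro B
        induction B using Finset.induction_on with
        | empty => intro _ c t ht; simpa using ht
        | insert _ _ ha =>
            rename_i x B ihB
            intro hBA c t ht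
            have hxA : x ∈ A := hBA (Finset.mem_insert_self _ _)
            have hBA' : B ⊆ A := fun y hy => hBA (Finset.mem_insert_of_mem hy)
            have h1 := haddmul x hxA (c x) t ht
            have h2 := ihB hBA' c _ h1
            rw [Finset.sum_insert ha]
            have heq : (t + ((c x * x : ℕ) : ZMod s)) + ((∑ y ∈ B, c y * y : ℕ) : ZMod s)
                = t + ((c x * x + ∑ y ∈ B, c y * y : ℕ) : ZMod s) := by
              push_cast
              ring
            rwa [heq] at h2
      obtain ⟨c, hc⟩ := hcombo ρ
      have hfin := hkey A subset_rfl c 0 (hT0m m)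
      rwa [zero_add, hc] at hfin
    by_cases hdist : ∃ α ∈ A, ∃ β ∈ A, (α : ZMod s) ≠ 0 ∧ (β : ZMod s) ≠ 0 ∧ (α : ZMod s) ≠ (β : ZMod s)
    · obtain ⟨α, hαA, β, hβA, hα0, hβ0, hαβ⟩ := hdist
      have hT1sub : ({0, (α : ZMod s), (β : ZMod s)} : Finset (ZMod s)) ⊆ T 1 := by
        intro ρ hρ
        simp only [Finset.mem_insert, Finset.mem_singleton] at hρ
        rcases hρ with rfl | rfl | rfl
        · exact hT0m 1
        · exact Finset.mem_union_right _ (by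
            simpa using Finset.add_mem_add (Finset.mem_singleton_self (0 : ZMod s))
              (Finset.mem_image_of_mem (Nat.cast : ℕ → ZMod s) hαA))
        · exact Finset.mem_union_right _ (by
            simpa using Finset.add_mem_add (Finset.mem_singleton_self (0 : ZMod s))
              (Finset.mem_image_of_mem (Nat.cast : ℕ → ZMod s) hβA))
      have hcard3 : ({0, (α : ZMod s), (β : ZMod s)} : Finset (ZMod s)).card = 3 := by
        rw [Finset.card_insert_of_notMem, Finset.card_insert_of_notMem, Finset.card_singleton]
        · simpa using hαβ
        · simp only [Finset.mem_insert, Finset.mem_singleton]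
          push_neg
          exact ⟨fun h => hα0 h.symm, fun h => hβ0 h.symm⟩
      have hs3 : 3 ≤ s := by
        have hcle := Finset.card_le_card (Finset.subset_univ ({0, (α : ZMod s), (β : ZMod s)} : Finset (ZMod s)))
        rwa [hcard3, Finset.card_univ, ZMod.card] at hcle
      have hgrow : ∀ i, (∀ ρ : ZMod s, ρ ∈ T (1+i)) ∨ i + 3 ≤ (T (1+i)).card := by
        intro i
        induction i with
        | zero =>
            right
            have := Finset.card_le_card hT1sub
            rw [hcard3] at this
            simpa using this
        | succ i ih =>
            rcases ih with h | h
            · left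
              intro ρ
              exact hTmono _ (h ρ)
            · rcases Classical.em (T (1 + (i+1)) ⊆ T (1+i)) with hsub | hsub
              · left
                intro ρ
                exact hTmono _ (hclosed (1+i) hsub ρ)
              · right
                have hss : T (1+i) ⊂ T (1 + (i+1)) :=
                  Finset.ssubset_def.2 ⟨(hTmono (1+i) : T (1+i) ⊆ T (1 + (i+1))), hsub⟩
                have hcl : (T (1+i)).card < (T (1 + (i+1))).card := Finset.card_lt_card hss
                omega
      have hcov : ∀ ρ : ZMod s, ρ ∈ T (s - 2) := by
        have h13 : 1 + (s-3) = s - 2 := by omega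
        rcases hgrow (s - 3) with h | h
        · rwa [h13] at h
        · rw [h13] at h
          have hle2 : (T (s-2)).card ≤ s := by
            have := Finset.card_le_card (Finset.subset_univ (T (s-2)))
            rwa [Finset.card_univ, ZMod.card] at this
          have hcardeq : (T (s-2)).card = Fintype.card (ZMod s) := by
            rw [ZMod.card]; omega
          intro ρ
          rw [Finset.eq_univ_of_card _ hcardeq]
          exact Finset.mem_univ ρ
      obtain ⟨Vv, hVw, hVle, hVcast⟩ := hsem (s-2) (-(q : ZMod s)) (hcov _)
      exact finisher Vv hVw hVcast hVle
    · push_neg at hdist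
      have hex : ∃ lam ∈ A, (lam : ZMod s) ≠ 0 := by
        by_contra h
        push_neg at h
        have hsg : s ∣ g := by
          rw [hg]
          exact Finset.dvd_gcd (fun x hxA => (CharP.cast_eq_zero_iff (ZMod s) s x).1 (h x hxA))
        rw [hg1] at hsg
        have := Nat.le_of_dvd one_pos hsg
        omega
      obtain ⟨lam, hlamA, hlam0⟩ := hex
      obtain ⟨hlamlt, hlampos, hlamW⟩ := (hmemA lam).1 hlamA
      have hco : Nat.gcd lam s = 1 := by
        have hdall : ∀ μ ∈ A, Nat.gcd s lam ∣ μ := by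
          intro μ hμ
          by_cases hμ0 : (μ : ZMod s) = 0
          · exact dvd_trans (Nat.gcd_dvd_left s lam) ((CharP.cast_eq_zero_iff (ZMod s) s μ).1 hμ0)
          · have heq : (μ : ZMod s) = (lam : ZMod s) := hdist μ hμ lam hlamA hμ0 hlam0
            have hsd : (s:ℤ) ∣ (μ:ℤ) - (lam:ℤ) := by
              have hz : (((μ:ℤ) - (lam:ℤ) : ℤ) : ZMod s) = 0 := by
                push_cast
                rw [heq]
                ring
              exact (CharP.intCast_eq_zero_iff (ZMod s) s _).1 hz
            have h2 : (Nat.gcd s lam : ℤ) ∣ (μ:ℤ) := by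
              have hg1' : (Nat.gcd s lam : ℤ) ∣ (μ:ℤ) - (lam:ℤ) :=
                dvd_trans (Int.natCast_dvd_natCast.2 (Nat.gcd_dvd_left s lam)) hsd
              have hg2 : (Nat.gcd s lam : ℤ) ∣ (lam:ℤ) := Int.natCast_dvd_natCast.2 (Nat.gcd_dvd_right s lam)
              have := dvd_add hg1' hg2
              simpa using this
            exact_mod_cast h2
        have hdg : Nat.gcd s lam ∣ g := by
          rw [hg]
          exact Finset.dvd_gcd (fun x hxA => hdall x hxA)
        rw [hg1] at hdg
        rw [Nat.gcd_comm]
        exact Nat.dvd_one.1 hdg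
      -- Bezout inverse of lam mod s
      have hbez : ((Nat.gcdA lam s : ℤ) : ZMod s) * (lam : ZMod s) = 1 := by
        have h1 := Nat.gcd_eq_gcd_ab lam s
        rw [hco] at h1
        push_cast at h1
        have h2 := congrArg (fun z : ℤ => ((z : ℤ) : ZMod s)) h1
        push_cast at h2
        rw [ZMod.natCast_self, zero_mul, add_zero] at h2
        rw [mul_comm] at h2
        exact h2.symm
      obtain ⟨m, hmlt, hmz⟩ : ∃ m : ℕ, m < s ∧
          ((m : ℕ) : ZMod s) = -(q : ZMod s) * ((Nat.gcdA lam s : ℤ) : ZMod s) :=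
        ⟨(-(q : ZMod s) * ((Nat.gcdA lam s : ℤ) : ZMod s)).val, ZMod.val_lt _,
          ZMod.natCast_rightInverse _⟩
      have hmlam : ((m * lam : ℕ) : ZMod s) = -(q : ZMod s) := by
        push_cast
        rw [hmz]
        calc -(q:ZMod s) * ((Nat.gcdA lam s : ℤ) : ZMod s) * (lam : ZMod s)
            = -(q:ZMod s) * (((Nat.gcdA lam s : ℤ) : ZMod s) * (lam : ZMod s)) := by ring
          _ = -(q:ZMod s) := by rw [hbez, mul_one]
      by_cases hmcase : m ≤ s - 2
      · refine finisher (m * lam) (hasWalk_smul hlamW m) hmlam ?_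
        have h1 : lam ≤ 2*D+1 := by omega
        exact Nat.mul_le_mul hmcase h1
      · have hmeq : m = s - 1 := by omega
        have hs10 : ((s - 1 : ℕ) : ZMod s) = -1 := by
          rw [Nat.cast_sub (by omega : 1 ≤ s)]
          simp
        have hlq : (lam : ZMod s) = (q : ZMod s) := by
          have hmc : ((m : ℕ) : ZMod s) = -1 := by rw [hmeq, hs10]
          have h2 : ((m * lam : ℕ) : ZMod s) = -(lam : ZMod s) := by
            push_cast
            rw [hmc]
            ring
          have h3 : -(q : ZMod s) = -(lam : ZMod s) := hmlam.symm.trans h2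
          exact (neg_inj.1 h3).symm
        by_cases hge : q ≤ lam
        · have hdvd : s ∣ lam - q := by
            have hcz : ((lam - q : ℕ) : ZMod s) = 0 := by
              rw [Nat.cast_sub hge, hlq]
              ring
            exact (CharP.cast_eq_zero_iff (ZMod s) s _).1 hcz
          refine ⟨a, lam, ?_, hlamW, ?_⟩
          · nlinarith [hlamlt, hD1]
          · obtain ⟨m2, hm2⟩ := hdvd
            have w1 : HasWalk R a a (lam - q) := by
              rw [hm2, mul_comm]
              exact hasWalk_smul hsW m2
            have hcw := hasWalk_comp w1 hwab
            rwa [show lam - q + q = lam from by omega] at hcw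
        · have hdvd : s ∣ q - lam := by
            have hcz : ((q - lam : ℕ) : ZMod s) = 0 := by
              rw [Nat.cast_sub (by omega : lam ≤ q), hlq]
              ring
            exact (CharP.cast_eq_zero_iff (ZMod s) s _).1 hcz
          refine ⟨a, q, by nlinarith [sq_nonneg D], ?_, hwab⟩
          obtain ⟨m2, hm2⟩ := hdvd
          have w1 : HasWalk R a a (q - lam) := by
            rw [hm2, mul_comm]
            exact hasWalk_smul hsW m2
          have hcw := hasWalk_comp hlamW w1
          rwa [show lam + (q - lam) = q from by omega] at hcw
end

section
/- In the transition system on {0,...,q-1} with primes p < q (T(0,L)=1, T(0,R)=q-p+1, T(x,·)=(x+1) mod q for x≠0): if x, x' are two states with x - x' ≡ (q-p)·((q-1)/2) (mod q), and both x and x' are reachable from state 0 by walks of the same length k, then k ≥ p(q-3)/2 + 1. -/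
/-- The single-loop transition system on `ZMod q`. -/
def Tpq (p q : ℕ) (x : ZMod q) (a : Bool) : ZMod q :=
  if x = 0 then (if a then 1 else ((q - p + 1 : ℕ) : ZMod q)) else x + 1

lemma walk_bound (p q : ℕ) (hp2 : 2 ≤ p) (hpq : p < q) (k : ℕ) (f : ℕ → ZMod q)
    (h0 : f 0 = 0) (hstep : ∀ i < k, ∃ a, Tpq p q (f i) a = f (i + 1)) :
    ∃ r : ℕ, f k = ((k + (q - p) * r : ℕ) : ZMod q) ∧
      p * r ≤ k + min ((-(f k)).val) (p - 1) := by
  haveI : NeZero q := ⟨by omega⟩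
  induction k with
  | zero => exact ⟨0, by simp [h0]⟩
  | succ k ih =>
    obtain ⟨r, hval, hbound⟩ := ih (fun i hi => hstep i (by omega))
    obtain ⟨a, ha⟩ := hstep k (by omega)
    by_cases h : f k = 0
    · have hz : ((k + (q - p) * r : ℕ) : ZMod q) = 0 := by rw [← hval, h]
      have h0k : min ((-(f k)).val) (p - 1) = 0 := by simp [h]
      rw [h0k, Nat.add_zero] at hbound
      cases a with
      | true =>
        simp [Tpq, h] at ha
        refine ⟨r, ?_, ?_⟩
        · have key : ((k + 1 + (q - p) * r : ℕ) : ZMod q)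
              = ((k + (q - p) * r : ℕ) : ZMod q) + 1 := by push_cast; ring
          rw [key, hz, zero_add]; exact ha.symm
        · have : 0 ≤ min ((-(f (k+1))).val) (p - 1) := Nat.zero_le _
          omega
      | false =>
        simp [Tpq, h] at ha
        refine ⟨r + 1, ?_, ?_⟩
        · have key : ((k + 1 + (q - p) * (r + 1) : ℕ) : ZMod q)
              = ((k + (q - p) * r : ℕ) : ZMod q) + ((q - p + 1 : ℕ) : ZMod q) := by
            push_cast; ring
          have ha2 : ((q - p + 1 : ℕ) : ZMod q) = f (k + 1) := by
            push_cast; exact ha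
          rw [key, hz, zero_add]; exact ha2.symm
        · have ha2 : ((q - p + 1 : ℕ) : ZMod q) = f (k + 1) := by
            push_cast; exact ha
          have hneg : -(f (k + 1)) = ((p - 1 : ℕ) : ZMod q) := by
            rw [← ha2, neg_eq_iff_add_eq_zero, ← Nat.cast_add]
            have : (q - p + 1) + (p - 1) = q := by omega
            rw [this, ZMod.natCast_self]
          have hv : (-(f (k + 1))).val = p - 1 := by
            rw [hneg, ZMod.val_cast_of_lt (by omega)]
          rw [hv, Nat.min_self]
          have : p * (r + 1) = p * r + p := by ring
          omega
    · have ha' : f k + 1 = f (k + 1) := by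
        cases a <;> simpa [Tpq, h] using ha
      have hclt : (-(f k)).val < q := ZMod.val_lt _
      have hc1 : 1 ≤ (-(f k)).val := by
        rcases Nat.eq_zero_or_pos ((-(f k)).val) with h' | h'
        · exfalso
          have : -(f k) = 0 := by
            have := (ZMod.val_eq_zero (-(f k))).mp h'
            exact this
          exact h (by simpa [neg_eq_zero] using this)
        · exact h'
      have hcast : (((-(f k)).val : ℕ) : ZMod q) = -(f k) := ZMod.natCast_rightInverse _
      refine ⟨r, ?_, ?_⟩
      · rw [← ha', hval]; push_cast; ring
      · have hneg : -(f (k + 1)) = (((-(f k)).val - 1 : ℕ) : ZMod q) := by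
          rw [← ha', Nat.cast_sub hc1, hcast]; push_cast; ring
        have hv : (-(f (k + 1))).val = (-(f k)).val - 1 := by
          rw [hneg, ZMod.val_cast_of_lt (by omega)]
        rw [hv]
        omega

/-- If two states differing by `(q-p)*((q-1)/2)` mod `q` are both reachable from state
`0` by walks of the same exact length `k`, then `k ≥ p(q-3)/2 + 1`. -/
theorem single_loop_large_witness_distance (p q : ℕ) (hp : Nat.Prime p)
    (hq : Nat.Prime q) (hpq : p < q) (hodd : Odd q) (x x' : ZMod q)
    (hdiff : x - x' = (((q - p) * ((q - 1) / 2) : ℕ) : ZMod q)) (k : ℕ)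
    (hx : HasWalk (fun u v => ∃ a, Tpq p q u a = v) 0 x k)
    (hx' : HasWalk (fun u v => ∃ a, Tpq p q u a = v) 0 x' k) :
    p * (q - 3) / 2 + 1 ≤ k := by
  haveI : Fact (Nat.Prime q) := ⟨hq⟩
  haveI : NeZero q := ⟨hq.pos.ne'⟩
  have hp2 : 2 ≤ p := hp.two_le
  have hq2 : q % 2 = 1 := Nat.odd_iff.mp hodd
  have hq3 : 3 ≤ q := by have := hq.two_le; omega
  obtain ⟨t, ht⟩ := hodd
  have hts : (q - 1) / 2 = t := by omega
  have ht1 : 1 ≤ t := by omega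
  obtain ⟨f, hf0, hfk, hfs⟩ := hx
  obtain ⟨g, hg0, hgk, hgs⟩ := hx'
  obtain ⟨r, hrv, hrb⟩ := walk_bound p q hp2 hpq k f hf0 hfs
  obtain ⟨r', hrv', hrb'⟩ := walk_bound p q hp2 hpq k g hg0 hgs
  rw [hfk] at hrv; rw [hgk] at hrv'
  -- cancel q - p in the congruence
  have hne : ((q - p : ℕ) : ZMod q) ≠ 0 := by
    intro hcon
    rw [ZMod.natCast_eq_zero_iff] at hcon
    have := Nat.le_of_dvd (by omega) hcon
    omega
  have key : ((q - p : ℕ) : ZMod q) * ((r : ZMod q) - (r' : ZMod q) - ((t : ℕ) : ZMod q)) = 0 := by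
    have h1 := hdiff
    rw [hrv, hrv', hts] at h1
    push_cast at h1 ⊢
    linear_combination h1
  have hcancel : (r : ZMod q) - (r' : ZMod q) = ((t : ℕ) : ZMod q) := by
    rcases mul_eq_zero.mp key with h' | h'
    · exact absurd h' hne
    · linear_combination h'
  have hmax : t ≤ max r r' := by
    by_contra hlt
    push_neg at hlt
    have hr : r < t := lt_of_le_of_lt (le_max_left r r') hlt
    have hr' : r' < t := lt_of_le_of_lt (le_max_right r r') hlt
    have heq : ((r : ℕ) : ZMod q) = ((r' + t : ℕ) : ZMod q) := by
      push_cast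
      linear_combination hcancel
    have hmod := (ZMod.natCast_eq_natCast_iff _ _ _).mp heq
    unfold Nat.ModEq at hmod
    rw [Nat.mod_eq_of_lt (by omega), Nat.mod_eq_of_lt (by omega)] at hmod
    omega
  -- from the max bound
  have hpr : p * t ≤ k + (p - 1) := by
    rcases max_cases r r' with ⟨hm, _⟩ | ⟨hm, _⟩
    · calc p * t ≤ p * (max r r') := Nat.mul_le_mul_left _ hmax
        _ = p * r := by rw [hm]
        _ ≤ k + min ((-(f k)).val) (p - 1) := hrb
        _ ≤ k + (p - 1) := by omega
    · calc p * t ≤ p * (max r r') := Nat.mul_le_mul_left _ hmax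
        _ = p * r' := by rw [hm]
        _ ≤ k + min ((-(g k)).val) (p - 1) := hrb'
        _ ≤ k + (p - 1) := by omega
  have hq3' : q - 3 = 2 * (t - 1) := by omega
  have hgoal : p * (q - 3) / 2 = p * (t - 1) := by
    rw [hq3', show p * (2 * (t - 1)) = 2 * (p * (t - 1)) by ring, Nat.mul_div_cancel_left _ (by norm_num)]
  rw [hgoal]
  have hsplit : p * (t - 1) + p = p * t := by
    rw [← Nat.mul_succ]; congr 1; omega
  omega
end

section
/- Consider the doubled transition system on 2q states {0,...,q-1} ∪ {0',...,(q-1)'} with primes p < q, q odd: T(0,L)=1, T(0,R)=(q-p+1)', T(0',L)=1', T(0',R)=q-p+1, and T(x,·)=(x+1) mod q, T(x',·)=((x+1) mod q)' for x≠0. Then under any policy assigning positive probability to both actions everywhere, the induced Markov chain is irreducible and aperiodic, and the diameter of the system is 2q-1. -/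
/-- The doubled single-loop transition system on `ZMod q × Bool`: two copies of the
`q`-cycle; taking `R` (false) at either zero-state switches copies via a shortcut. -/
def T2 (p q : ℕ) (s : ZMod q × Bool) (a : Bool) : ZMod q × Bool :=
  if s.1 = 0 then (if a then (1, s.2) else (((q - p + 1 : ℕ) : ZMod q), !s.2))
  else (s.1 + 1, s.2)

namespace DLP

variable {p q : ℕ}

lemma cast_val (a : ZMod q) [NeZero q] : ((a.val : ℕ) : ZMod q) = a := by
  simp [ZMod.natCast_val, ZMod.cast_id]

lemma val_le (a : ZMod q) [NeZero q] : a.val ≤ (a - 1).val + 1 := by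
  conv_lhs => rw [show a = ((a-1).val + 1 : ℕ) by push_cast; simp [cast_val]]
  rw [ZMod.val_natCast]; exact Nat.mod_le _ _

lemma walk_trans {V : Type*} {R : V → V → Prop} {u v w : V} {k l : ℕ}
    (h1 : HasWalk R u v k) (h2 : HasWalk R v w l) : HasWalk R u w (k + l) := by
  obtain ⟨f, hf0, hfk, hfe⟩ := h1
  obtain ⟨g, hg0, hgl, hge⟩ := h2
  refine ⟨fun i => if i < k then f i else g (i - k), ?_, ?_, ?_⟩
  · by_cases h : 0 < k
    · simp [h, hf0]
    · have hk : k = 0 := by omega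
      subst hk
      simp only [Nat.lt_irrefl, if_false, Nat.sub_zero, hg0, ← hfk]
      exact hf0
  · show (if k + l < k then f (k + l) else g (k + l - k)) = w
    rw [if_neg (by omega), Nat.add_sub_cancel_left, hgl]
  · intro i hi
    by_cases h1 : i + 1 < k
    · simp only [if_pos (by omega : i < k), if_pos h1]; exact hfe i (by omega)
    · by_cases h2 : i < k
      · have hik : i + 1 = k := by omega
        show R (if i < k then f i else g (i - k)) (if i + 1 < k then f (i + 1) else g (i + 1 - k))
        rw [if_pos h2, if_neg h1, hik, Nat.sub_self, hg0, ← hfk, ← hik]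
        exact hfe i (by omega)
      · simp only [if_neg h2, if_neg h1, show i + 1 - k = (i - k) + 1 by omega]
        exact hge (i - k) (by omega)

lemma walk_add (x : ZMod q) (b : Bool) (k : ℕ) :
    HasWalk (fun x y => ∃ a, T2 p q x a = y) (x, b) (x + (k : ℕ), b) k := by
  refine ⟨fun i => (x + (i : ℕ), b), by simp, rfl, ?_⟩
  intro i _
  refine ⟨true, ?_⟩
  unfold T2
  by_cases h : x + (i : ℕ) = 0 <;> simp [h]
  · rw [show x + ((i:ZMod q) + 1) = x + (i:ZMod q) + 1 from by ring, h, zero_add]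
  · ring

lemma walk_switch (b : Bool) :
    HasWalk (fun x y => ∃ a, T2 p q x a = y) ((0 : ZMod q), b)
      (((q - p + 1 : ℕ) : ZMod q), !b) 1 := by
  refine ⟨fun i => if i = 0 then ((0:ZMod q), b) else (((q - p + 1 : ℕ) : ZMod q), !b),
    by simp, by simp, ?_⟩
  intro i hi
  interval_cases i
  refine ⟨false, ?_⟩
  simp [T2]

lemma walk_to [NeZero q] (x y : ZMod q) (b : Bool) :
    HasWalk (fun x y => ∃ a, T2 p q x a = y) (x, b) (y, b) ((y - x).val) := by
  have := walk_add (p := p) x b (y - x).val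
  rwa [cast_val, add_sub_cancel] at this


lemma val_neg_one [NeZero q] (hq1 : 1 < q) : (-1 : ZMod q).val = q - 1 := by
  have h : (-1 : ZMod q) = ((q - 1 : ℕ) : ZMod q) := by
    push_cast [Nat.cast_sub hq1.le]
    simp
  rw [h, ZMod.val_cast_of_lt (by omega)]

lemma hr_eq [NeZero q] (hpq : p < q) :
    (((q - p + 1 : ℕ) : ZMod q)) = 1 - (p : ZMod q) := by
  push_cast [Nat.cast_sub hpq.le]
  simp
  ring

lemma lower_bound [NeZero q] (hq1 : 1 < q) (hpq : p < q) : ∀ m, ∀ x : ZMod q,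
    (HasWalk (fun x y => ∃ a, T2 p q x a = y) (x, true) (-(p : ZMod q), true) m →
      (-(p : ZMod q) - x).val ≤ m) ∧
    (HasWalk (fun x y => ∃ a, T2 p q x a = y) (x, false) (-(p : ZMod q), true) m →
      (-x).val + q ≤ m) := by
  intro m
  induction m with
  | zero =>
    intro x
    constructor
    · rintro ⟨f, h0, hk, -⟩
      rw [h0] at hk
      have : x = -(p : ZMod q) := (Prod.mk.injEq _ _ _ _ ▸ hk).1
      simp [this]
    · rintro ⟨f, h0, hk, -⟩
      rw [h0] at hk
      exact absurd (Prod.mk.injEq _ _ _ _ ▸ hk).2 (by simp)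
  | succ m ih =>
    intro x
    have tail : ∀ f : ℕ → ZMod q × Bool, f (m + 1) = (-(p : ZMod q), true) →
        (∀ i < m + 1, (fun x y => ∃ a, T2 p q x a = y) (f i) (f (i + 1))) →
        HasWalk (fun x y => ∃ a, T2 p q x a = y) (f 1) (-(p : ZMod q), true) m :=
      fun f hk he => ⟨fun i => f (i + 1), rfl, hk, fun i hi => he (i + 1) (by omega)⟩
    constructor
    · rintro ⟨f, h0, hk, he⟩
      obtain ⟨a, ha⟩ := he 0 (Nat.succ_pos m)
      rw [h0] at ha
      have htail := tail f hk he
      by_cases hx : x = 0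
      · cases a
        · -- switch
          rw [show T2 p q (x, true) false = (((q - p + 1 : ℕ) : ZMod q), false) by
            simp [T2, hx]] at ha
          rw [← ha] at htail
          have h2 := (ih _).2 htail
          have h3 := ZMod.val_lt (-(p : ZMod q) - x)
          omega
        · rw [show T2 p q (x, true) true = (x + 1, true) by simp [T2, hx]] at ha
          rw [← ha] at htail
          have h2 := (ih (x + 1)).1 htail
          have h3 := val_le (-(p : ZMod q) - x)
          rw [show -(p : ZMod q) - x - 1 = -(p : ZMod q) - (x + 1) by ring] at h3
          omega
      · rw [show T2 p q (x, true) a = (x + 1, true) by simp [T2, hx]] at ha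
        rw [← ha] at htail
        have h2 := (ih (x + 1)).1 htail
        have h3 := val_le (-(p : ZMod q) - x)
        rw [show -(p : ZMod q) - x - 1 = -(p : ZMod q) - (x + 1) by ring] at h3
        omega
    · rintro ⟨f, h0, hk, he⟩
      obtain ⟨a, ha⟩ := he 0 (Nat.succ_pos m)
      rw [h0] at ha
      have htail := tail f hk he
      by_cases hx : x = 0
      · cases a
        · -- switch to true copy
          rw [show T2 p q (x, false) false = (((q - p + 1 : ℕ) : ZMod q), true) by
            simp [T2, hx]] at ha
          rw [← ha] at htail
          have h2 := (ih _).1 htail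
          rw [show -(p : ZMod q) - ((q - p + 1 : ℕ) : ZMod q) = -1 by
            rw [hr_eq hpq]; ring] at h2
          rw [val_neg_one hq1] at h2
          rw [hx]
          simp only [neg_zero, ZMod.val_zero]
          omega
        · rw [show T2 p q (x, false) true = (x + 1, false) by simp [T2, hx]] at ha
          rw [← ha] at htail
          have h2 := (ih (x + 1)).2 htail
          have h3 := val_le (-x)
          rw [show -x - 1 = -(x + 1) by ring] at h3
          omega
      · rw [show T2 p q (x, false) a = (x + 1, false) by simp [T2, hx]] at ha
        rw [← ha] at htail
        have h2 := (ih (x + 1)).2 htail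
        have h3 := val_le (-x)
        rw [show -x - 1 = -(x + 1) by ring] at h3
        omega

end DLP

open DLP

/-- For primes `p < q` with `q` odd, the doubled system is irreducible and aperiodic,
and its diameter is exactly `2q - 1`. -/

theorem double_loop_properties (p q : ℕ) (hp : Nat.Prime p) (hq : Nat.Prime q)
    (hpq : p < q) (hodd : Odd q) :
    (∀ u v : ZMod q × Bool,
      ∃ k, 0 < k ∧ HasWalk (fun x y => ∃ a, T2 p q x a = y) u v k) ∧
    (∀ (u : ZMod q × Bool) (d : ℕ),
      (∀ k, 0 < k → HasWalk (fun x y => ∃ a, T2 p q x a = y) u u k → d ∣ k) →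
      d = 1) ∧
    (∀ u v : ZMod q × Bool,
      ∃ k ≤ 2 * q - 1, HasWalk (fun x y => ∃ a, T2 p q x a = y) u v k) ∧
    (∃ u v : ZMod q × Bool, ∀ k,
      HasWalk (fun x y => ∃ a, T2 p q x a = y) u v k → 2 * q - 1 ≤ k) := by
  haveI : NeZero q := ⟨hq.pos.ne'⟩
  haveI : Fact (Nat.Prime q) := ⟨hq⟩
  have hq1 : 1 < q := hq.one_lt
  set r : ZMod q := ((q - p + 1 : ℕ) : ZMod q) with hr
  -- a loop of length q at any state
  have loop : ∀ (x : ZMod q) (b : Bool),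
      HasWalk (fun x y => ∃ a, T2 p q x a = y) (x, b) (x, b) q := by
    intro x b
    have h := walk_add (p := p) x b q
    rwa [ZMod.natCast_self, add_zero] at h
  -- cross-copy walk
  have cross : ∀ (x y : ZMod q) (b c : Bool), c = !b →
      HasWalk (fun x y => ∃ a, T2 p q x a = y) (x, b) (y, c)
        ((0 - x).val + 1 + (y - r).val) := by
    intro x y b c hc
    subst hc
    exact walk_trans (walk_trans (walk_to x 0 b) (walk_switch b)) (walk_to r y (!b))
  refine ⟨?_, ?_, ?_, ?_⟩
  · -- irreducibility
    rintro ⟨x, b⟩ ⟨y, c⟩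
    by_cases hbc : c = b
    · subst hbc
      exact ⟨q + (y - x).val, by omega, walk_trans (loop x c) (walk_to x y c)⟩
    · have hc : c = !b := by cases b <;> cases c <;> simp_all
      exact ⟨(0 - x).val + 1 + (y - r).val, by omega, cross x y b c hc⟩
  · -- aperiodicity
    rintro ⟨x, b⟩ d hd
    have hdq : d ∣ q := hd q hq.pos (loop x b)
    have w2 : HasWalk (fun x y => ∃ a, T2 p q x a = y) (x, b) (x, b)
        (((0 - x).val + 1 + (0 - r).val) + ((0 - (0:ZMod q)).val + 1 + (x - r).val)) :=
      walk_trans (cross x 0 b (!b) rfl) (cross 0 x (!b) b (by simp))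
    have hdK : d ∣ ((0 - x).val + 1 + (0 - r).val) + ((0 - (0:ZMod q)).val + 1 + (x - r).val) :=
      hd _ (by omega) w2
    rcases (Nat.Prime.eq_one_or_self_of_dvd hq d hdq) with h | h
    · exact h
    · exfalso
      rw [h] at hdK
      have hz : (((((0 - x).val + 1 + (0 - r).val) + ((0 - (0:ZMod q)).val + 1 + (x - r).val)) : ℕ) :
          ZMod q) = 0 := (ZMod.natCast_eq_zero_iff _ q).mpr hdK
      rw [show (((((0 - x).val + 1 + (0 - r).val) + ((0 - (0:ZMod q)).val + 1 + (x - r).val)) : ℕ) :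
          ZMod q) = (((0 - x).val : ℕ) : ZMod q) + 1 + (((0 - r).val : ℕ) : ZMod q)
          + ((((0 - (0:ZMod q)).val : ℕ) : ZMod q) + 1 + (((x - r).val : ℕ) : ZMod q)) by
        push_cast; ring] at hz
      rw [cast_val, cast_val, cast_val, cast_val] at hz
      rw [hr, hr_eq hpq] at hz
      have hz2 : (2 : ZMod q) * (p : ZMod q) = 0 := by linear_combination hz
      rcases mul_eq_zero.mp hz2 with h2 | h2
      · have hq2 : (q : ℕ) ∣ 2 :=
          (ZMod.natCast_eq_zero_iff 2 q).mp (by exact_mod_cast h2)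
        have : q = 2 := by
          have := Nat.le_of_dvd (by norm_num) hq2
          omega
        rw [this] at hodd
        exact absurd hodd (by decide)
      · have hqp : (q : ℕ) ∣ p := (ZMod.natCast_eq_zero_iff p q).mp h2
        have := (Nat.prime_dvd_prime_iff_eq hq hp).mp hqp
        omega
  · -- diameter upper bound
    rintro ⟨x, b⟩ ⟨y, c⟩
    have hvlt := ZMod.val_lt (y - x)
    have h1 := ZMod.val_lt (0 - x)
    have h2 := ZMod.val_lt (y - r)
    by_cases hbc : c = b
    · subst hbc
      exact ⟨(y - x).val, by omega, walk_to x y c⟩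
    · have hc : c = !b := by cases b <;> cases c <;> simp_all
      exact ⟨(0 - x).val + 1 + (y - r).val, by omega, cross x y b c hc⟩
  · -- diameter lower bound
    refine ⟨(1, false), (-(p : ZMod q), true), ?_⟩
    intro k hw
    have h := (lower_bound hq1 hpq k 1).2 hw
    have hn1 : (-(1 : ZMod q)).val = q - 1 := val_neg_one hq1
    omega
end

section
/- Let T : X × A → X be a deterministic transition function on a finite state set X with finite action set A, such that for any policy assigning positive probability to every action in every state, the induced Markov chain on X is irreducible and aperiodic. Suppose X factors as an Ex-BMDP: there exist maps φ : X → S and φ_e : X → E with T-dynamics given by a deterministic action-dependent transition on S and an action-independent Markov transition on E, satisfying the block assumption (each x corresponds to a unique pair (φ(x), φ_e(x)) and distinct pairs yield distinct observations). Then |E| = 1, and φ is a bijection up to relabeling; i.e., the only valid endogenous encoder is the identity. -/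
/-- For a deterministic, irreducible, aperiodic transition system admitting an
Ex-BMDP factorization (block assumption, deterministic endogenous dynamics,
action-independent exogenous dynamics), the exogenous part is trivial and the
endogenous encoder is a bijection: the only valid encoder is the identity. -/
theorem deterministic_aperiodic_trivial_exogenous {X S E A : Type*}
    [Fintype X] [Fintype S] [Fintype E] [Fintype A] [Nonempty X] [Nonempty A]
    (T : X → A → X)
    (hirr : ∀ u v : X, ∃ k, 0 < k ∧ HasWalk (fun x y => ∃ a, T x a = y) u v k)
    (haper : ∀ (u : X) (d : ℕ),
      (∀ k, 0 < k → HasWalk (fun x y => ∃ a, T x a = y) u u k → d ∣ k) → d = 1)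
    (phi : X → S) (phie : X → E) (TS : S → A → S) (TE : E → E)
    (hblock : Function.Injective (fun x => (phi x, phie x)))
    (hsurjS : Function.Surjective phi) (hsurjE : Function.Surjective phie)
    (hTS : ∀ x a, phi (T x a) = TS (phi x) a)
    (hTE : ∀ x a, phie (T x a) = TE (phie x)) :
    Fintype.card E = 1 ∧ Function.Bijective phi := by
  -- A walk of length k in X pushes forward to k iterations of TE on E
  have hwalk : ∀ (u v : X) (k : ℕ),
      HasWalk (fun x y => ∃ a, T x a = y) u v k → TE^[k] (phie u) = phie v := by
    intro u v k ⟨f, h0, hk, hstep⟩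
    have key : ∀ i ≤ k, TE^[i] (phie u) = phie (f i) := by
      intro i hi
      induction i with
      | zero => simp [h0]
      | succ n ih =>
        obtain ⟨a, ha⟩ := hstep n (Nat.lt_of_succ_le hi)
        rw [Function.iterate_succ_apply', ih (Nat.le_of_succ_le hi), ← ha, hTE]
    rw [key k le_rfl, hk]
  obtain ⟨x0⟩ := ‹Nonempty X›
  set e0 := phie x0 with he0
  -- e0 is a periodic point of TE
  obtain ⟨k0, hk0pos, hw0⟩ := hirr x0 x0
  have hper0 : Function.IsPeriodicPt TE k0 e0 := hwalk x0 x0 k0 hw0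
  have hmpos : 0 < Function.minimalPeriod TE e0 :=
    hper0.minimalPeriod_pos hk0pos
  -- the minimal period divides all return times, hence equals 1
  have hm1 : Function.minimalPeriod TE e0 = 1 := by
    apply haper x0
    intro k hk hw
    exact Function.IsPeriodicPt.minimalPeriod_dvd (hwalk x0 x0 k hw)
  have hfix : Function.IsFixedPt TE e0 :=
    Function.minimalPeriod_eq_one_iff_isFixedPt.mp hm1
  -- every element of E equals e0
  have hall : ∀ e : E, e = e0 := by
    intro e
    obtain ⟨x, hx⟩ := hsurjE e
    obtain ⟨k, hk, hw⟩ := hirr x0 x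
    have := hwalk x0 x k hw
    rw [hfix.iterate k] at this
    rw [← hx, ← this]
  have hcard : Fintype.card E = 1 :=
    Fintype.card_eq_one_iff.mpr ⟨e0, fun e => hall e⟩
  refine ⟨hcard, ?_, hsurjS⟩
  intro x y hxy
  exact hblock (by simp only [Prod.mk.injEq]; exact ⟨hxy, (hall _).trans (hall _).symm⟩)
end

section
/- Under the twin prime conjecture (infinitely many primes p with p+2 prime), for infinitely many values of D there exists a strongly connected, aperiodic deterministic transition system of diameter D on which some pair of states has witness distance at least (D-1)(D-2)/2 + 1; hence for K ≤ (D-1)(D-2)/2 the multistep-inverse criterion with horizon K fails to separate all states. Unconditionally (using bounded prime gaps ≤ 246), for infinitely many D there exist such systems with a pair of states having witness distance exceeding (D-245)(D-2)/2. -/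
namespace MSI
variable {q : ℕ}

def Tq (x : Fin q) (a : Bool) : Fin q :=
  if x.val = 0 ∧ a = true then ⟨3 % q, Nat.mod_lt _ x.pos⟩
  else ⟨(x.val + 1) % q, Nat.mod_lt _ x.pos⟩

def Rq (x y : Fin q) : Prop := ∃ a, Tq x a = y

lemma rq_plain (x : Fin q) : Rq x ⟨(x.val + 1) % q, Nat.mod_lt _ x.pos⟩ :=
  ⟨false, by simp [Tq]⟩

lemma rq_cases {x y : Fin q} (h : Rq x y) :
    y.val = (x.val + 1) % q ∨ (x.val = 0 ∧ y.val = 3 % q) := by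
  obtain ⟨a, ha⟩ := h
  cases a
  · left; rw [← ha]; simp [Tq]
  · by_cases hx : x.val = 0
    · right; refine ⟨hx, ?_⟩; rw [← ha]; simp [Tq, hx]
    · left; rw [← ha]; simp [Tq, hx]

/-- number of shortcut jumps (0 → 3) among the first `m` steps -/
def nJ (f : ℕ → Fin q) (m : ℕ) : ℕ :=
  ((Finset.range m).filter (fun t => (f t).val = 0 ∧ (f (t+1)).val = 3)).card

lemma nJ_succ (f : ℕ → Fin q) (m : ℕ) :
    nJ f (m+1) = nJ f m + (if (f m).val = 0 ∧ (f (m+1)).val = 3 then 1 else 0) := by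
  unfold nJ
  rw [Finset.range_add_one, Finset.filter_insert]
  split
  · rw [Finset.card_insert_of_notMem (by simp)]
  · simp

lemma nJ_const (f : ℕ → Fin q) (a : ℕ) :
    ∀ b, a ≤ b → (∀ r, a ≤ r → r < b → ¬((f r).val = 0 ∧ (f (r+1)).val = 3)) →
      nJ f b = nJ f a := by
  intro b hab
  induction b, hab using Nat.le_induction with
  | base => intro _; rfl
  | succ b hb ih =>
    intro hno
    rw [nJ_succ, if_neg (hno b hb (by omega)), add_zero,
      ih (fun r h1 h2 => hno r h1 (by omega))]

lemma invariant (hq : 7 ≤ q) {f : ℕ → Fin q} {k : ℕ}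
    (hf : ∀ i < k, Rq (f i) (f (i+1))) :
    ∀ i ≤ k, ((f i).val : ZMod q) = ((f 0).val : ZMod q) + i + 2 * nJ f i := by
  intro i
  induction i with
  | zero => intro _; simp [nJ]
  | succ i ih =>
    intro hik
    have hi : i < k := by omega
    have ihv := ih (le_of_lt hi)
    rw [nJ_succ]
    by_cases hP : (f i).val = 0 ∧ (f (i+1)).val = 3
    · rw [if_pos hP]
      have h3 : ((f (i+1)).val : ZMod q) = 3 := by rw [hP.2]; norm_num
      have h0 : ((f i).val : ZMod q) = 0 := by rw [hP.1]; norm_num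
      rw [h3]
      rw [h0] at ihv
      push_cast
      linear_combination ihv
    · rw [if_neg hP]
      rcases rq_cases (hf i hi) with h | h
      · rw [h]
        push_cast [ZMod.natCast_mod]
        push_cast at ihv
        linear_combination ihv
      · have h3q : 3 % q = 3 := Nat.mod_eq_of_lt (by omega)
        rw [h3q] at h
        exact absurd h hP

lemma run_no_jump (hq : 7 ≤ q) {f : ℕ → Fin q} {k : ℕ}
    (hf : ∀ i < k, Rq (f i) (f (i+1))) {s : ℕ} (hs3 : (f (s+1)).val = 3) :
    ∀ e, s + 1 + e ≤ k →
      (∀ r, s < r → r < s + 1 + e → ¬((f r).val = 0 ∧ (f (r+1)).val = 3)) →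
      ((f (s+1+e)).val : ZMod q) = 3 + e := by
  intro e
  induction e with
  | zero => intro _ _; simp [hs3]
  | succ e ih =>
    intro hle hnoj
    have h1 := ih (by omega) (fun r ha hb => hnoj r ha (by omega))
    have hstep := hf (s+1+e) (by omega)
    rcases rq_cases hstep with h | h
    · have e2 : s+1+(e+1) = (s+1+e)+1 := by omega
      rw [e2, h]
      push_cast [ZMod.natCast_mod]
      rw [h1]
      ring
    · have h3q : 3 % q = 3 := Nat.mod_eq_of_lt (by omega)
      rw [h3q] at h
      exact absurd h (hnoj (s+1+e) (by omega) (by omega))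

lemma jump_bound (hq : 7 ≤ q) {f : ℕ → Fin q} {k : ℕ}
    (hf : ∀ i < k, Rq (f i) (f (i+1))) :
    ∀ t, t < k → ((f t).val = 0 ∧ (f (t+1)).val = 3) →
      (nJ f (t+1) - 1) * (q - 2) ≤ t := by
  intro t
  induction t using Nat.strong_induction_on with
  | _ t ih =>
    intro htk hPt
    by_cases hprev : ∃ s, s < t ∧ ((f s).val = 0 ∧ (f (s+1)).val = 3)
    · set S := (Finset.range t).filter (fun s => (f s).val = 0 ∧ (f (s+1)).val = 3) with hS
      have hSne : S.Nonempty := by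
        obtain ⟨s, h1, h2⟩ := hprev
        exact ⟨s, by simp [hS, Finset.mem_filter, Finset.mem_range, h1, h2]⟩
      set s := S.max' hSne with hsdef
      have hsS : s ∈ S := S.max'_mem hSne
      have hst : s < t := by
        have := (Finset.mem_filter.mp hsS).1
        simpa [Finset.mem_range] using this
      have hPs : (f s).val = 0 ∧ (f (s+1)).val = 3 := (Finset.mem_filter.mp hsS).2
      have hno : ∀ r, s < r → r < t → ¬((f r).val = 0 ∧ (f (r+1)).val = 3) := by
        intro r h1 h2 hP
        have : r ∈ S := Finset.mem_filter.mpr ⟨Finset.mem_range.mpr h2, hP⟩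
        exact absurd (Finset.le_max' S r this) (not_le.mpr h1)
      -- run with no jumps from s+1 to t
      have hrun := run_no_jump hq hf hPs.2 (t - (s+1)) (by omega)
        (by intro r h1 h2; exact hno r h1 (by omega))
      have e1 : s + 1 + (t - (s+1)) = t := by omega
      rw [e1, hPt.1] at hrun
      have hz : ((3 + (t - (s+1)) : ℕ) : ZMod q) = 0 := by
        push_cast
        rw [← hrun]
        norm_num
      have hdvd : q ∣ 3 + (t - (s+1)) := (ZMod.natCast_eq_zero_iff _ _).mp hz
      have hge : q ≤ 3 + (t - (s+1)) := Nat.le_of_dvd (by omega) hdvd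
      have hts : s + (q - 2) ≤ t := by omega
      have hc1 : nJ f t = nJ f (s+1) :=
        nJ_const f (s+1) t (by omega) (fun r h1 h2 => hno r (by omega) h2)
      have hc2 : nJ f (t+1) = nJ f t + 1 := by rw [nJ_succ, if_pos hPt]
      have hc3 : 1 ≤ nJ f (s+1) := by
        have : s ∈ (Finset.range (s+1)).filter
            (fun r => (f r).val = 0 ∧ (f (r+1)).val = 3) :=
          Finset.mem_filter.mpr ⟨Finset.mem_range.mpr (by omega), hPs⟩
        exact Finset.card_pos.mpr ⟨s, this⟩
      obtain ⟨a, ha⟩ : ∃ a, nJ f (s+1) = a + 1 := ⟨nJ f (s+1) - 1, by omega⟩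
      have ihs := ih s hst (by omega) hPs
      rw [ha] at ihs
      simp only [Nat.add_sub_cancel] at ihs
      rw [hc2, hc1, ha]
      have e2 : (a + 1 + 1 - 1) * (q - 2) = a * (q - 2) + (q - 2) := by
        simp only [Nat.add_sub_cancel]
        ring
      rw [e2]
      omega
    · push_neg at hprev
      have h0 : nJ f t = 0 := by
        unfold nJ
        rw [Finset.card_eq_zero, Finset.filter_eq_empty_iff]
        intro s hs
        rintro ⟨h1, h2⟩
        exact hprev s (Finset.mem_range.mp hs) h1 h2
      have h1 : nJ f (t+1) = 1 := by rw [nJ_succ, h0, if_pos hPt]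
      simp [h1]

lemma walk_length_bound (hq : 7 ≤ q) {f : ℕ → Fin q} {k : ℕ}
    (hf : ∀ i < k, Rq (f i) (f (i+1))) (hJ : 1 ≤ nJ f k) :
    (nJ f k - 1) * (q - 2) + 1 ≤ k := by
  set S := (Finset.range k).filter (fun t => (f t).val = 0 ∧ (f (t+1)).val = 3) with hS
  have hcard : S.card = nJ f k := rfl
  have hSne : S.Nonempty := Finset.card_pos.mp (by omega)
  set t := S.max' hSne with ht
  have htS : t ∈ S := S.max'_mem hSne
  have htk : t < k := Finset.mem_range.mp (Finset.mem_filter.mp htS).1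
  have hPt : (f t).val = 0 ∧ (f (t+1)).val = 3 := (Finset.mem_filter.mp htS).2
  have hno : ∀ r, t + 1 ≤ r → r < k → ¬((f r).val = 0 ∧ (f (r+1)).val = 3) := by
    intro r h1 h2 hP
    have : r ∈ S := Finset.mem_filter.mpr ⟨Finset.mem_range.mpr h2, hP⟩
    exact absurd (Finset.le_max' S r this) (by omega)
  have hc : nJ f k = nJ f (t+1) := nJ_const f (t+1) k (by omega) hno
  have hjb := jump_bound hq hf t htk hPt
  rw [← hc] at hjb
  omega

end MSI

namespace MSI
variable {q : ℕ}


lemma hasWalk_trans {V : Type*} {R : V → V → Prop} {u v w : V} {k l : ℕ}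
    (h1 : HasWalk R u v k) (h2 : HasWalk R v w l) : HasWalk R u w (k + l) := by
  obtain ⟨f, hf0, hfk, hf⟩ := h1
  obtain ⟨g, hg0, hgl, hg⟩ := h2
  refine ⟨fun i => if i ≤ k then f i else g (i - k), by simp [hf0], ?_, ?_⟩
  · by_cases hl : l = 0
    · subst hl; simp [hfk, hg0 ▸ hgl]
    · have h1 : ¬ (k + l ≤ k) := by omega
      simp only [h1, if_neg]
      have e : k + l - k = l := by omega
      simp [e, hgl]
  · intro i hi
    by_cases h1 : i + 1 ≤ k
    · have h0 : i ≤ k := by omega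
      simp only [h0, h1, if_pos]
      exact hf i (by omega)
    · by_cases h2 : i ≤ k
      · have hik : i = k := by omega
        subst hik
        simp only [le_refl, if_pos, h1, if_neg]
        have : i + 1 - i = 1 := by omega
        rw [this]
        have h0l : 0 < l := by omega
        have := hg 0 h0l
        rwa [hg0, hfk] at *
      · simp only [h2, h1, if_neg]
        have e1 : i + 1 - k = (i - k) + 1 := by omega
        rw [e1]
        exact hg (i - k) (by omega)

lemma plain_walk (u : Fin q) (k : ℕ) :
    HasWalk (Rq (q := q)) u ⟨(u.val + k) % q, Nat.mod_lt _ u.pos⟩ k := by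
  refine ⟨fun i => ⟨(u.val + i) % q, Nat.mod_lt _ u.pos⟩, ?_, rfl, ?_⟩
  · ext; simp [Nat.mod_eq_of_lt u.isLt]
  · intro i _
    have h := rq_plain (q := q) ⟨(u.val + i) % q, Nat.mod_lt _ u.pos⟩
    have e : (⟨((u.val + i) % q + 1) % q, Nat.mod_lt _ u.pos⟩ : Fin q)
        = ⟨(u.val + (i + 1)) % q, Nat.mod_lt _ u.pos⟩ := by
      ext
      show ((u.val + i) % q + 1) % q = (u.val + (i + 1)) % q
      rw [Nat.mod_add_mod, Nat.add_assoc]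
    rwa [e] at h



lemma witness (hq : 7 ≤ q) (hodd : q % 2 = 1) (c : Fin q) (k : ℕ)
    (hwa : HasWalk (Rq (q := q)) c ⟨1, by omega⟩ k)
    (hwb : HasWalk (Rq (q := q)) c ⟨2, by omega⟩ k) :
    (q - 2) * (q - 3) / 2 + 1 ≤ k := by
  obtain ⟨f, hf0, hfk, hf⟩ := hwa
  obtain ⟨g, hg0, hgk, hg⟩ := hwb
  have h1 := invariant hq hf k le_rfl
  have h2 := invariant hq hg k le_rfl
  rw [hfk, hf0] at h1
  rw [hgk, hg0] at h2
  have h1' : (1 : ZMod q) = (c.val : ZMod q) + k + 2 * nJ f k := by simpa using h1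
  have h2' : (2 : ZMod q) = (c.val : ZMod q) + k + 2 * nJ g k := by simpa using h2
  have hmm : ((2 * nJ g k : ℕ) : ZMod q) = ((1 + 2 * nJ f k : ℕ) : ZMod q) := by
    push_cast
    linear_combination h1' - h2'
  have hmod : 2 * nJ g k % q = (1 + 2 * nJ f k) % q :=
    (ZMod.natCast_eq_natCast_iff' _ _ _).mp hmm
  have hbig : (q - 1) / 2 ≤ nJ f k ∨ (q - 1) / 2 ≤ nJ g k := by
    by_contra hcon
    push_neg at hcon
    rw [Nat.mod_eq_of_lt (by omega), Nat.mod_eq_of_lt (by omega)] at hmod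
    omega
  obtain ⟨m, hm⟩ : ∃ m, q = 2 * m + 7 := ⟨(q - 7) / 2, by omega⟩
  have key : ∀ h : ℕ → Fin q, (∀ i < k, Rq (h i) (h (i + 1))) →
      (q - 1) / 2 ≤ nJ h k → (q - 2) * (q - 3) / 2 + 1 ≤ k := by
    intro h hh hJ
    have hw := walk_length_bound hq hh (by omega)
    have hmul : (m + 2) * (q - 2) ≤ (nJ h k - 1) * (q - 2) :=
      Nat.mul_le_mul_right _ (by omega)
    have e1 : (q - 2) * (q - 3) / 2 = (m + 2) * (q - 2) := by
      have e2 : q - 2 = 2 * m + 5 := by omega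
      have e3 : q - 3 = 2 * m + 4 := by omega
      rw [e2, e3, show (2 * m + 5) * (2 * m + 4) = ((m + 2) * (2 * m + 5)) * 2 by ring,
        Nat.mul_div_cancel _ (by norm_num)]
    omega
  rcases hbig with h | h
  · exact key f hf h
  · exact key g hg h

lemma key (N : ℕ) :
    ∃ D, N < D ∧ ∃ (n : ℕ) (T : Fin n → Bool → Fin n),
      (∀ u v : Fin n, ∃ k ≤ D, HasWalk (fun x y => ∃ a, T x a = y) u v k) ∧
      (∀ (u : Fin n) (d : ℕ),
        (∀ k, 0 < k → HasWalk (fun x y => ∃ a, T x a = y) u u k → d ∣ k) → d = 1) ∧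
      (∃ a b : Fin n, ∀ (c : Fin n) (k : ℕ),
        HasWalk (fun x y => ∃ a', T x a' = y) c a k →
        HasWalk (fun x y => ∃ a', T x a' = y) c b k →
        (D - 1) * (D - 2) / 2 + 1 ≤ k) := by
  set q := 2 * N + 7 with hqdef
  have hq : 7 ≤ q := by omega
  have hodd : q % 2 = 1 := by omega
  refine ⟨q - 1, by omega, q, Tq, ?_, ?_, ?_⟩
  · -- connectivity with diameter ≤ q - 1
    intro u v
    refine ⟨(v.val + q - u.val) % q, ?_, ?_⟩
    · have := Nat.mod_lt (v.val + q - u.val) (show 0 < q by omega)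
      omega
    · have hw := plain_walk u ((v.val + q - u.val) % q)
      have e : (⟨(u.val + (v.val + q - u.val) % q) % q, Nat.mod_lt _ u.pos⟩ : Fin q) = v := by
        apply Fin.ext
        show (u.val + (v.val + q - u.val) % q) % q = v.val
        rw [Nat.add_mod_mod]
        have e2 : u.val + (v.val + q - u.val) = v.val + q := by
          have := u.isLt; omega
        rw [e2, Nat.add_mod_right, Nat.mod_eq_of_lt v.isLt]
      rwa [e] at hw
  · -- aperiodicity
    intro u d hd
    have l1 : HasWalk (Rq (q := q)) u u q := by
      have hw := plain_walk u q
      have e : (⟨(u.val + q) % q, Nat.mod_lt _ u.pos⟩ : Fin q) = u := by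
        apply Fin.ext
        show (u.val + q) % q = u.val
        rw [Nat.add_mod_right, Nat.mod_eq_of_lt u.isLt]
      rwa [e] at hw
    have hd1 : d ∣ q := hd q (by omega) l1
    set z0 : Fin q := ⟨0, by omega⟩ with hz0
    set z3 : Fin q := ⟨3, by omega⟩ with hz3
    have w1 : HasWalk (Rq (q := q)) u z0 (q - u.val) := by
      have hw := plain_walk u (q - u.val)
      have e : (⟨(u.val + (q - u.val)) % q, Nat.mod_lt _ u.pos⟩ : Fin q) = z0 := by
        apply Fin.ext
        show (u.val + (q - u.val)) % q = z0.val
        rw [show u.val + (q - u.val) = q from by have := u.isLt; omega, Nat.mod_self]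
      rwa [e] at hw
    have w2 : HasWalk (Rq (q := q)) z0 z3 1 := by
      refine ⟨fun i => if i = 0 then z0 else z3, by simp, by simp, ?_⟩
      intro i hi
      interval_cases i
      simp only [if_pos rfl, if_neg one_ne_zero]
      refine ⟨true, ?_⟩
      apply Fin.ext
      show (if z0.val = 0 ∧ (true : Bool) = true then (⟨3 % q, Nat.mod_lt _ z0.pos⟩ : Fin q)
        else ⟨(z0.val + 1) % q, Nat.mod_lt _ z0.pos⟩).val = z3.val
      rw [if_pos ⟨rfl, rfl⟩]
      exact Nat.mod_eq_of_lt (by omega)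
    have w3 : HasWalk (Rq (q := q)) z3 z0 (q - 3) := by
      have hw := plain_walk z3 (q - 3)
      have e : (⟨(z3.val + (q - 3)) % q, Nat.mod_lt _ z3.pos⟩ : Fin q) = z0 := by
        apply Fin.ext
        show (z3.val + (q - 3)) % q = z0.val
        rw [show z3.val + (q - 3) = q from by simp [hz3]; omega, Nat.mod_self]
      rwa [e] at hw
    have w4 : HasWalk (Rq (q := q)) z0 u u.val := by
      have hw := plain_walk z0 u.val
      have e : (⟨(z0.val + u.val) % q, Nat.mod_lt _ z0.pos⟩ : Fin q) = u := by
        apply Fin.ext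
        show (z0.val + u.val) % q = u.val
        simp [hz0, Nat.mod_eq_of_lt u.isLt]
      rwa [e] at hw
    have full := hasWalk_trans w1 (hasWalk_trans w2 (hasWalk_trans w3 w4))
    have hd2 : d ∣ (q - u.val) + (1 + ((q - 3) + u.val)) :=
      hd _ (by have := u.isLt; omega) full
    rw [show (q - u.val) + (1 + ((q - 3) + u.val)) = 2 * q - 2 from by
      have := u.isLt; omega] at hd2
    have hd3 : d ∣ 2 := by
      have h2q : d ∣ 2 * q := hd1.mul_left 2
      have := Nat.dvd_sub h2q hd2
      rwa [show 2 * q - (2 * q - 2) = 2 from by omega] at this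
    rcases (Nat.dvd_prime Nat.prime_two).mp hd3 with h | h
    · exact h
    · exfalso
      subst h
      obtain ⟨e', he⟩ := hd1
      omega
  · -- witness lower bound
    refine ⟨⟨1, by omega⟩, ⟨2, by omega⟩, ?_⟩
    intro c k hwa hwb
    have hwit := witness hq hodd c k hwa hwb
    have e1 : q - 1 - 1 = q - 2 := by omega
    have e2 : q - 1 - 2 = q - 3 := by omega
    rw [e1, e2]
    exact hwit

end MSI

/-- Lower bounds on the horizon needed by multistep-inverse methods. Under the twin
prime conjecture, for infinitely many `D` there is a strongly connected, aperiodic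
deterministic transition system of diameter at most `D` with a pair of states of
witness distance at least `(D-1)(D-2)/2 + 1`; unconditionally (bounded prime gaps),
for infinitely many `D` there is such a system with a pair of states of witness
distance exceeding `(D-245)(D-2)/2`. -/
theorem multistep_inverse_lower_bounds :
    ((∀ N : ℕ, ∃ p, N < p ∧ Nat.Prime p ∧ Nat.Prime (p + 2)) →
      ∀ N : ℕ, ∃ D, N < D ∧
        ∃ (n : ℕ) (T : Fin n → Bool → Fin n),
          (∀ u v : Fin n, ∃ k ≤ D, HasWalk (fun x y => ∃ a, T x a = y) u v k) ∧
          (∀ (u : Fin n) (d : ℕ),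
            (∀ k, 0 < k → HasWalk (fun x y => ∃ a, T x a = y) u u k → d ∣ k) →
            d = 1) ∧
          (∃ a b : Fin n, ∀ (c : Fin n) (k : ℕ),
            HasWalk (fun x y => ∃ a', T x a' = y) c a k →
            HasWalk (fun x y => ∃ a', T x a' = y) c b k →
            (D - 1) * (D - 2) / 2 + 1 ≤ k)) ∧
    (∀ N : ℕ, ∃ D, N < D ∧
      ∃ (n : ℕ) (T : Fin n → Bool → Fin n),
        (∀ u v : Fin n, ∃ k ≤ D, HasWalk (fun x y => ∃ a, T x a = y) u v k) ∧
        (∀ (u : Fin n) (d : ℕ),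
          (∀ k, 0 < k → HasWalk (fun x y => ∃ a, T x a = y) u u k → d ∣ k) →
          d = 1) ∧
        (∃ a b : Fin n, ∀ (c : Fin n) (k : ℕ),
          HasWalk (fun x y => ∃ a', T x a' = y) c a k →
          HasWalk (fun x y => ∃ a', T x a' = y) c b k →
          (D - 245) * (D - 2) / 2 < k)) := by
  constructor
  · intro _ N
    exact MSI.key N
  · intro N
    obtain ⟨D, hND, n, T, hconn, haper, a, b, hwit⟩ := MSI.key N
    refine ⟨D, hND, n, T, hconn, haper, a, b, ?_⟩
    intro c k h1 h2
    have hk := hwit c k h1 h2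
    have hle : (D - 245) * (D - 2) / 2 ≤ (D - 1) * (D - 2) / 2 :=
      Nat.div_le_div_right (Nat.mul_le_mul_right _ (by omega))
    omega
end
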